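/- Let R be a Kähler algebraic curvature tensor on a Hermitian space of dimension n ≥ 2 with nonnegative orthogonal bisectional curvature and vanishing Ricci curvature (i.e., for every unitary frame, Σ_γ R_{αᾱγγ̄} = 0 for all α). Then R_{αᾱαᾱ} = 0 for every unit vector e_α, and consequently R ≡ 0. -/

import Mathlib

noncomputable section

open Complex

/-- A Kähler algebraic curvature tensor on the Hermitian space `ℂⁿ`:
`R x y z w` stands for `R(X, Ȳ, Z, W̄)`; it is complex-linear in the unbarred
slots (1 and 3), conjugate-linear in the barred slots (2 and 4), and satisfies
the Kähler symmetries `R(X,Ȳ,Z,W̄) = R(Z,Ȳ,X,W̄) = R(Z,W̄,X,Ȳ)` together with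
the conjugate symmetry `R(X,Ȳ,Z,W̄) = conj (R(Y,X̄,W,Z̄))`. -/
structure KahlerCurvatureTensor (n : ℕ) where
  R : EuclideanSpace ℂ (Fin n) → EuclideanSpace ℂ (Fin n) →
      EuclideanSpace ℂ (Fin n) → EuclideanSpace ℂ (Fin n) → ℂ
  map_add₁ : ∀ x x' y z w, R (x + x') y z w = R x y z w + R x' y z w
  map_smul₁ : ∀ (c : ℂ) x y z w, R (c • x) y z w = c * R x y z w
  map_add₂ : ∀ x y y' z w, R x (y + y') z w = R x y z w + R x y' z w
  map_smul₂ : ∀ (c : ℂ) x y z w, R x (c • y) z w = (starRingEnd ℂ) c * R x y z w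
  map_add₃ : ∀ x y z z' w, R x y (z + z') w = R x y z w + R x y z' w
  map_smul₃ : ∀ (c : ℂ) x y z w, R x y (c • z) w = c * R x y z w
  map_add₄ : ∀ x y z w w', R x y z (w + w') = R x y z w + R x y z w'
  map_smul₄ : ∀ (c : ℂ) x y z w, R x y z (c • w) = (starRingEnd ℂ) c * R x y z w
  sym₁₃ : ∀ x y z w, R x y z w = R z y x w
  symPair : ∀ x y z w, R x y z w = R z w x y
  conjSym : ∀ x y z w, R x y z w = (starRingEnd ℂ) (R y x w z)

/-- Nonnegative orthogonal bisectional curvature: `R(X,X̄,Y,Ȳ) ≥ 0` for all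
`(1,0)`-vectors `X, Y` with `⟨X, Ȳ⟩ = 0`. -/
def KahlerCurvatureTensor.NOB {n : ℕ} (T : KahlerCurvatureTensor n) : Prop :=
  ∀ x y : EuclideanSpace ℂ (Fin n), (inner ℂ x y : ℂ) = 0 → 0 ≤ (T.R x x y y).re

namespace KahlerCurvatureTensor

variable {n : ℕ} (T : KahlerCurvatureTensor n)

lemma expand4 (a b c d : ℂ) (x y : EuclideanSpace ℂ (Fin n)) :
    T.R (x + a • y) (x + b • y) (x + c • y) (x + d • y) =
      T.R x x x x + (starRingEnd ℂ) d * T.R x x x y + c * T.R x x y x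
        + c * (starRingEnd ℂ) d * T.R x x y y
        + (starRingEnd ℂ) b * T.R x y x x
        + (starRingEnd ℂ) b * (starRingEnd ℂ) d * T.R x y x y
        + (starRingEnd ℂ) b * c * T.R x y y x
        + (starRingEnd ℂ) b * c * (starRingEnd ℂ) d * T.R x y y y
        + a * T.R y x x x + a * (starRingEnd ℂ) d * T.R y x x y
        + a * c * T.R y x y x + a * c * (starRingEnd ℂ) d * T.R y x y y
        + a * (starRingEnd ℂ) b * T.R y y x x
        + a * (starRingEnd ℂ) b * (starRingEnd ℂ) d * T.R y y x y
        + a * (starRingEnd ℂ) b * c * T.R y y y x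
        + a * (starRingEnd ℂ) b * c * (starRingEnd ℂ) d * T.R y y y y := by
  simp only [T.map_add₁, T.map_add₂, T.map_add₃, T.map_add₄,
    T.map_smul₁, T.map_smul₂, T.map_smul₃, T.map_smul₄]
  ring

lemma expand34 (c d : ℂ) (p q z w : EuclideanSpace ℂ (Fin n)) :
    T.R p q (z + c • w) (z + d • w) =
      T.R p q z z + (starRingEnd ℂ) d * T.R p q z w + c * T.R p q w z
        + c * (starRingEnd ℂ) d * T.R p q w w := by
  simp only [T.map_add₃, T.map_add₄, T.map_smul₃, T.map_smul₄]
  ring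

lemma expand12 (a b : ℂ) (x y z w : EuclideanSpace ℂ (Fin n)) :
    T.R (x + a • y) (x + b • y) z w =
      T.R x x z w + (starRingEnd ℂ) b * T.R x y z w + a * T.R y x z w
        + a * (starRingEnd ℂ) b * T.R y y z w := by
  simp only [T.map_add₁, T.map_add₂, T.map_smul₁, T.map_smul₂]
  ring

lemma zero₁ (y z w : EuclideanSpace ℂ (Fin n)) : T.R 0 y z w = 0 := by
  have h := T.map_smul₁ 0 0 y z w
  simpa using h

end KahlerCurvatureTensor

/-- a Kähler algebraic curvature tensor (`n ≥ 2`) with nonnegative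
orthogonal bisectional curvature and vanishing Ricci curvature (for every
unitary frame, `Σ_γ R_{αᾱγγ̄} = 0` for all `α`) satisfies `R_{αᾱαᾱ} = 0` for
every unit vector, and consequently `R ≡ 0`. -/
theorem nob_ricci_flat_implies_flat {n : ℕ} (hn : 2 ≤ n)
    (T : KahlerCurvatureTensor n) (hNOB : T.NOB)
    (hRic : ∀ b : OrthonormalBasis (Fin n) ℂ (EuclideanSpace ℂ (Fin n)),
      ∀ α : Fin n, ∑ γ : Fin n, T.R (b α) (b α) (b γ) (b γ) = 0) :
    (∀ x : EuclideanSpace ℂ (Fin n), ‖x‖ = 1 → T.R x x x x = 0) ∧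
      (∀ x y z w : EuclideanSpace ℂ (Fin n), T.R x y z w = 0) := by
  classical
  haveI : NeZero n := ⟨by omega⟩
  -- extend a unit vector to an orthonormal basis
  have hext : ∀ x : EuclideanSpace ℂ (Fin n), ‖x‖ = 1 →
      ∃ b : OrthonormalBasis (Fin n) ℂ (EuclideanSpace ℂ (Fin n)), b 0 = x := by
    intro x hx
    have hcard : Module.finrank ℂ (EuclideanSpace ℂ (Fin n)) = Fintype.card (Fin n) := by
      simp
    have horth : Orthonormal ℂ (({0} : Set (Fin n)).restrict (fun _ : Fin n => x)) := by
      rw [orthonormal_iff_ite]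
      rintro ⟨i, hi⟩ ⟨j, hj⟩
      simp only [Set.mem_singleton_iff] at hi hj
      subst hi; subst hj
      simp [Set.restrict, inner_self_eq_norm_sq_to_K, hx]
    obtain ⟨b, hb⟩ := horth.exists_orthonormalBasis_extension_of_card_eq hcard
    exact ⟨b, hb 0 rfl⟩
  -- the diagonal values are real
  have hreal : ∀ v, (T.R v v v v).im = 0 := fun v =>
    Complex.conj_eq_iff_im.mp (T.conjSym v v v v).symm
  -- Part 1 : diagonal values are ≤ 0
  have hdiag : ∀ x, ‖x‖ = 1 → (T.R x x x x).re ≤ 0 := by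
    intro x hx
    obtain ⟨b, hb0⟩ := hext x hx
    have h := hRic b 0
    rw [hb0] at h
    have hre : ∑ γ : Fin n, (T.R x x (b γ) (b γ)).re = 0 := by
      have := congrArg Complex.re h
      simpa [Complex.re_sum] using this
    have hsplit : (T.R x x (b 0) (b 0)).re
        + ∑ γ ∈ Finset.univ.erase 0, (T.R x x (b γ) (b γ)).re = 0 :=
      (Finset.add_sum_erase Finset.univ (fun γ => (T.R x x (b γ) (b γ)).re)
        (Finset.mem_univ (0 : Fin n))).trans hre
    have hnn : 0 ≤ ∑ γ ∈ Finset.univ.erase 0, (T.R x x (b γ) (b γ)).re := by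
      refine Finset.sum_nonneg fun γ hγ => hNOB x (b γ) ?_
      have hne : (0 : Fin n) ≠ γ := (Finset.ne_of_mem_erase hγ).symm
      have horth : (inner ℂ (b 0) (b γ) : ℂ) = 0 := b.orthonormal.2 hne
      rw [hb0] at horth
      exact horth
    rw [hb0] at hsplit
    linarith
  -- Part 2 : for orthonormal pairs the sum of diagonal values is ≥ 0
  have hpair : ∀ x y, ‖x‖ = 1 → ‖y‖ = 1 → (inner ℂ x y : ℂ) = 0 →
      0 ≤ (T.R x x x x).re + (T.R y y y y).re := by
    intro x y hx hy hxy
    have hyx : (inner ℂ y x : ℂ) = 0 := by rw [← inner_conj_symm, hxy, map_zero]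
    have hxx : (inner ℂ x x : ℂ) = 1 := by
      rw [inner_self_eq_norm_sq_to_K, hx]; norm_num
    have hyy : (inner ℂ y y : ℂ) = 1 := by
      rw [inner_self_eq_norm_sq_to_K, hy]; norm_num
    have ho1 : (inner ℂ (x + (1:ℂ) • y) (x + (-1:ℂ) • y) : ℂ) = 0 := by
      simp only [inner_add_left, inner_add_right, inner_smul_left, inner_smul_right,
        map_neg, map_one]
      rw [hxy, hyx, hxx, hyy]
      ring
    have ho2 : (inner ℂ (x + Complex.I • y) (x + (-Complex.I) • y) : ℂ) = 0 := by
      simp only [inner_add_left, inner_add_right, inner_smul_left, inner_smul_right,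
        Complex.conj_I, map_neg, map_one]
      rw [hxy, hyx, hxx, hyy]
      ring_nf
      simp [Complex.I_sq]
    have hQ1 := hNOB _ _ ho1
    have hQ2 := hNOB _ _ ho2
    have key1 : T.R (x + (1:ℂ) • y) (x + (1:ℂ) • y) (x + (-1:ℂ) • y) (x + (-1:ℂ) • y)
        = T.R x x x x - T.R y x y x - T.R x y x y + T.R y y y y := by
      rw [T.expand4]
      simp only [map_one, map_neg, Complex.conj_I]
      linear_combination ((-1)) * (T.symPair x x x y) + ((-1)) * (T.sym₁₃ x x y x) +
        ((1)) * (T.sym₁₃ x x y y) + ((-1)) * (T.sym₁₃ x y y x) +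
        ((1)) * (T.sym₁₃ x y y y) + ((1)) * (T.symPair y x y y)
    have key2 : T.R (x + Complex.I • y) (x + Complex.I • y)
          (x + (-Complex.I) • y) (x + (-Complex.I) • y)
        = T.R x x x x + T.R y x y x + T.R x y x y + T.R y y y y := by
      rw [T.expand4]
      simp only [map_one, map_neg, Complex.conj_I]
      linear_combination ((1) * Complex.I) * (T.symPair x x x y) +
        ((-1) * Complex.I) * (T.sym₁₃ x x y x) + ((1)) * (T.sym₁₃ x x y y) +
        ((-1)) * (T.sym₁₃ x y y x) + ((-1) * Complex.I) * (T.sym₁₃ x y y y) +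
        ((1) * Complex.I) * (T.symPair y x y y) +
        (((-1)) * (T.R x x y y)) * Complex.I_sq + (((-1)) * (T.R x y x y)) * Complex.I_sq +
        (((1)) * (T.R x y y x)) * Complex.I_sq +
        (((1) * Complex.I) * (T.R x y y y)) * Complex.I_sq +
        (((1)) * (T.R y x x y)) * Complex.I_sq + (((-1)) * (T.R y x y x)) * Complex.I_sq +
        (((-1) * Complex.I) * (T.R y x y y)) * Complex.I_sq +
        (((-1)) * (T.R y y x x)) * Complex.I_sq +
        (((-1) * Complex.I) * (T.R y y x y)) * Complex.I_sq +
        (((1) * Complex.I) * (T.R y y y x)) * Complex.I_sq +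
        (((-1) + (1) * Complex.I^2) * (T.R y y y y)) * Complex.I_sq
    rw [key1] at hQ1
    rw [key2] at hQ2
    simp only [Complex.add_re, Complex.sub_re] at hQ1 hQ2
    linarith
  -- vanishing on unit vectors
  have hunit : ∀ x, ‖x‖ = 1 → T.R x x x x = 0 := by
    intro x hx
    obtain ⟨b, hb0⟩ := hext x hx
    have j : Fin n := ⟨1, by omega⟩
    have hj : (0 : Fin n) ≠ (⟨1, by omega⟩ : Fin n) := by
      intro hEq
      have := congrArg Fin.val hEq
      simp at this
    have hy : ‖b ⟨1, by omega⟩‖ = 1 := b.orthonormal.1 _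
    have hxy : (inner ℂ x (b ⟨1, by omega⟩) : ℂ) = 0 := by
      have horth : (inner ℂ (b 0) (b ⟨1, by omega⟩) : ℂ) = 0 := b.orthonormal.2 hj
      rw [hb0] at horth
      exact horth
    have h1 := hdiag x hx
    have h2 := hdiag (b ⟨1, by omega⟩) hy
    have h3 := hpair x (b ⟨1, by omega⟩) hx hy hxy
    have him := hreal x
    have hre0 : (T.R x x x x).re = 0 := by linarith
    exact Complex.ext hre0 (by simpa using him)
  -- vanishing of the diagonal on all vectors
  have hf : ∀ v, T.R v v v v = 0 := by
    intro v
    rcases eq_or_ne v 0 with rfl | hv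
    · exact T.zero₁ 0 0 0
    · have hvn : ‖v‖ ≠ 0 := norm_ne_zero_iff.mpr hv
      have hc : ((‖v‖ : ℂ))⁻¹ ≠ 0 := by
        simp [Complex.ofReal_ne_zero, hvn]
      have hcu : ‖((‖v‖ : ℂ))⁻¹ • v‖ = 1 := by
        rw [norm_smul]
        simp [norm_inv, hvn]
      have h := hunit _ hcu
      simp only [T.map_smul₁, T.map_smul₂, T.map_smul₃, T.map_smul₄] at h
      simp only [mul_eq_zero, map_eq_zero] at h
      rcases h with h | h | h | h | h
      · exact absurd h hc
      · exact absurd h hc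
      · exact absurd h hc
      · exact absurd h hc
      · exact h
  -- R x x z z = 0 for all x, z
  have hE : ∀ x z, T.R x x z z = 0 := by
    intro x z
    have H1 := (T.expand4 1 1 1 1 x z).symm.trans (hf _)
    have H2 := (T.expand4 (-1) (-1) (-1) (-1) x z).symm.trans (hf _)
    have H3 := (T.expand4 Complex.I Complex.I Complex.I Complex.I x z).symm.trans (hf _)
    have H4 := (T.expand4 (-Complex.I) (-Complex.I) (-Complex.I) (-Complex.I) x z).symm.trans
      (hf _)
    simp only [map_one, map_neg, Complex.conj_I] at H1 H2 H3 H4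
    linear_combination ((1/4)) * (T.sym₁₃ x x z z) + ((1/2)) * (T.symPair x x z z) +
      ((-1/4)) * (T.sym₁₃ x z z x) + ((1/16)) * (H1) + ((1/16)) * (H2) + ((1/16)) * (H3) +
      ((1/16)) * (H4) + ((-1/4)) * (hf x) + ((-1/4)) * (hf z) +
      (((1/8)) * (T.R x x z z)) * Complex.I_sq + (((1/8)) * (T.R z x x z)) * Complex.I_sq +
      (((1/8)) * (T.R z z x x)) * Complex.I_sq + (((1/8)) * (T.R x z z x)) * Complex.I_sq +
      (((-1/8)) * (T.R x z x z)) * Complex.I_sq + (((-1/8)) * (T.R z x z x)) * Complex.I_sq +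
      (((1/8) + (-1/8) * Complex.I^2) * (T.R z z z z)) * Complex.I_sq
  -- R x x z w = 0 for all x, z, w
  have hE2 : ∀ x z w, T.R x x z w = 0 := by
    intro x z w
    have K1 := (T.expand34 1 1 x x z w).symm.trans (hE x _)
    have K2 := (T.expand34 Complex.I Complex.I x x z w).symm.trans (hE x _)
    simp only [map_one, Complex.conj_I] at K1 K2
    linear_combination ((1/2)) * (K1) + ((1/2) * Complex.I) * (K2) +
      ((-1/2) + (-1/2) * Complex.I) * (hE x z) + ((-1/2) + (-1/2) * Complex.I) * (hE x w) +
      (((1/2)) * (T.R x x z w)) * Complex.I_sq + (((-1/2)) * (T.R x x w z)) * Complex.I_sq +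
      (((1/2) * Complex.I) * (T.R x x w w)) * Complex.I_sq
  -- full vanishing
  have hfull : ∀ x y z w, T.R x y z w = 0 := by
    intro x y z w
    have K1 := (T.expand12 1 1 x y z w).symm.trans (hE2 _ z w)
    have K2 := (T.expand12 Complex.I Complex.I x y z w).symm.trans (hE2 _ z w)
    simp only [map_one, Complex.conj_I] at K1 K2
    linear_combination ((1/2)) * (K1) + ((1/2) * Complex.I) * (K2) +
      ((-1/2) + (-1/2) * Complex.I) * (hE2 x z w) + ((-1/2) + (-1/2) * Complex.I) * (hE2 y z w) +
      (((1/2)) * (T.R x y z w)) * Complex.I_sq + (((-1/2)) * (T.R y x z w)) * Complex.I_sq +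
      (((1/2) * Complex.I) * (T.R y y z w)) * Complex.I_sq
  exact ⟨hunit, hfull⟩
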